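/- Fix γ > 1 and n = 2, ε = γ-1, m = 1. With β(μ) = 2μ/(ε(1+μ)) and β₂(μ) = -V_+(μ)/(1+V_+(μ))² as above (now with 𝔞₂ = ((ε-2)/ε)μ - 1, 𝔔₂ = ((ε-2)/ε)²μ² - (2(ε+2)/ε)μ + 1), the inequality β(μ) > β₂(μ) FAILS for all sufficiently small μ > 0. -/
import Mathlib


set_option maxHeartbeats 1000000 in
theorem stmt_18 (γ : ℝ) (hγ : 1 < γ) (ε : ℝ) (hε : ε = γ - 1)
    (β β₂ Vp : ℝ → ℝ)
    (hβ : ∀ μ, β μ = 2 * μ / (ε * (1 + μ)))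
    (hVp : ∀ μ, Vp μ = ((((ε - 2) / ε) * μ - 1)
        + Real.sqrt (((ε - 2) / ε) ^ 2 * μ ^ 2 - (2 * (ε + 2) / ε) * μ + 1)) / 2)
    (hβ₂ : ∀ μ, β₂ μ = -(Vp μ) / (1 + Vp μ) ^ 2) :
    ∃ μ₀ > 0, ∀ μ, 0 < μ → μ < μ₀ → ¬ (β μ > β₂ μ) := by
  have hε0 : 0 < ε := by rw [hε]; linarith
  have hεne : ε ≠ 0 := ne_of_gt hε0
  refine ⟨min (1/2) (ε/32), by positivity, ?_⟩
  intro μ hμ hμ₀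
  have hμh : μ < 1/2 := lt_of_lt_of_le hμ₀ (min_le_left _ _)
  have hμε : μ < ε/32 := lt_of_lt_of_le hμ₀ (min_le_right _ _)
  set c : ℝ := 2 * μ / ε with hc
  set s : ℝ := 1 + c - μ with hs
  have hcpos : 0 < c := by positivity
  have hcsmall : c < 1/16 := by
    rw [hc, div_lt_iff₀ hε0]; nlinarith
  have hs2 : (1/2 : ℝ) < s := by rw [hs]; linarith
  have h4c : 4 * c ≤ s ^ 2 := by nlinarith
  -- rewrite the quantities under Vp
  have ha : ((ε - 2) / ε) * μ - 1 = -s := by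
    rw [hs, hc]; field_simp; ring
  have hQ : ((ε - 2) / ε) ^ 2 * μ ^ 2 - (2 * (ε + 2) / ε) * μ + 1 = s ^ 2 - 4 * c := by
    rw [hs, hc]; field_simp; ring
  have hQnn : 0 ≤ s ^ 2 - 4 * c := by linarith
  set r : ℝ := Real.sqrt (s ^ 2 - 4 * c) with hr
  have hrnn : 0 ≤ r := Real.sqrt_nonneg _
  have hrsq : r ^ 2 = s ^ 2 - 4 * c := Real.sq_sqrt hQnn
  have hVpμ : Vp μ = (r - s) / 2 := by
    rw [hVp μ, ha, hQ, ← hr]; ring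
  -- upper bound on r : r ≤ s - 2c/s
  have hub : r ≤ s - 2 * c / s := by
    have h1 : 0 ≤ s - 2 * c / s := by
      rw [sub_nonneg, div_le_iff₀ (by linarith : (0:ℝ) < s)]; nlinarith
    have h2 : s ^ 2 - 4 * c ≤ (s - 2 * c / s) ^ 2 := by
      have : (s - 2 * c / s) ^ 2 = s ^ 2 - 4 * c + (2 * c / s) ^ 2 := by
        field_simp; ring
      nlinarith [sq_nonneg (2 * c / s)]
    calc r ≤ Real.sqrt ((s - 2 * c / s) ^ 2) := Real.sqrt_le_sqrt h2
      _ = s - 2 * c / s := Real.sqrt_sq h1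
  -- lower bound on r : s - 4c/s ≤ r
  have hlb : s - 4 * c / s ≤ r := by
    have h1 : 0 ≤ s - 4 * c / s := by
      rw [sub_nonneg, div_le_iff₀ (by linarith : (0:ℝ) < s)]; nlinarith
    have h2 : (s - 4 * c / s) ^ 2 ≤ s ^ 2 - 4 * c := by
      have he : (s - 4 * c / s) ^ 2 = s ^ 2 - 8 * c + (4 * c / s) ^ 2 := by
        field_simp; ring
      have : (4 * c / s) ^ 2 ≤ 4 * c := by
        rw [div_pow, div_le_iff₀ (by positivity : (0:ℝ) < s ^ 2)]; nlinarith
      linarith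
    calc s - 4 * c / s = Real.sqrt ((s - 4 * c / s) ^ 2) := (Real.sqrt_sq h1).symm
      _ ≤ r := Real.sqrt_le_sqrt h2
  -- bounds on x := Vp μ
  set x : ℝ := Vp μ with hx
  have hxub : x ≤ -(c / s) := by
    rw [hVpμ]
    have : r - s ≤ -(2 * c / s) := by linarith
    rw [div_le_iff₀ (by norm_num : (0:ℝ) < 2)]
    rw [div_eq_mul_inv] at this ⊢
    nlinarith
  have hxlb : -(2 * c / s) ≤ x := by
    rw [hVpμ]
    have : -(4 * c / s) ≤ r - s := by linarith
    rw [le_div_iff₀ (by norm_num : (0:ℝ) < 2)]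
    rw [div_eq_mul_inv] at this ⊢
    nlinarith
  have hcs : c / s < 1/8 := by
    rw [div_lt_iff₀ (by linarith : (0:ℝ) < s)]; nlinarith
  have h1x : 0 < 1 + x := by
    have : -(2 * c / s) > -(1:ℝ) := by
      have : 2 * c / s < 1 := by
        rw [div_lt_iff₀ (by linarith : (0:ℝ) < s)]; nlinarith
      linarith
    linarith
  -- final comparison
  intro hcontra
  rw [hβ, hβ₂] at hcontra
  rw [gt_iff_lt, div_lt_div_iff₀ (by positivity) (by nlinarith [sq_nonneg (1+x)] : (0:ℝ) < ε * (1 + μ))] at hcontra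
  -- hcontra : -x * (ε * (1+μ)) < 2μ * (1+x)^2 ; derive contradiction
  have hspos' : (0:ℝ) < s := by linarith
  have hA : 1 + x ≤ (1 - μ) / s := by
    have : 1 - c / s = (1 - μ) / s := by
      field_simp; rw [hs]; ring
    linarith
  have hB : (1 + x) ^ 2 ≤ ((1 - μ) / s) ^ 2 :=
    pow_le_pow_left₀ (le_of_lt h1x) hA 2
  have hD : c / s * (ε * (1 + μ)) ≤ -x * (ε * (1 + μ)) := by
    have := hxub
    nlinarith [mul_pos hε0 (by linarith : (0:ℝ) < 1 + μ)]
  have hE : 2 * μ * ((1 - μ) / s) ^ 2 ≤ c / s * (ε * (1 + μ)) := by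
    have hcε : c * ε = 2 * μ := by rw [hc]; field_simp
    rw [div_pow, div_mul_eq_mul_div, ← mul_div_assoc,
      div_le_div_iff₀ (by positivity : (0:ℝ) < s ^ 2) hspos']
    have key : (1 - μ) ^ 2 ≤ (1 + μ) * s := by nlinarith
    have h2μs : (0:ℝ) ≤ 2 * μ * s := by positivity
    calc 2 * μ * (1 - μ) ^ 2 * s ≤ 2 * μ * ((1 + μ) * s) * s := by
          nlinarith [mul_le_mul_of_nonneg_left key h2μs]
      _ = c * (ε * (1 + μ)) * s ^ 2 := by
          rw [← hcε]; ring
  rw [← hx] at hcontra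
  have hC : 2 * μ * (1 + x) ^ 2 ≤ 2 * μ * ((1 - μ) / s) ^ 2 :=
    mul_le_mul_of_nonneg_left hB (by linarith)
  linarith
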